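/- arXiv:2305.19277 — 2 statements merged into one kernel-verified Lean document; each statement's English description precedes it below -/
import Mathlib

section
/- Let G be a starlike graph with clique partition (V_0, V_1, …, V_t) and let S ⊆ V(G). If no vertex of S − Z is adjacent to any vertex of S ∩ Z, then S is m-convexly independent. -/
open SimpleGraph

variable {V : Type*}

/-- The closed neighborhood of a vertex. -/
def closedNbhd (G : SimpleGraph V) (v : V) : Set V := insert v (G.neighborSet v)

/-- A vertex is simplicial if its closed neighborhood induces a complete graph. -/
def IsSimplicial (G : SimpleGraph V) (v : V) : Prop :=
  ∀ a ∈ closedNbhd G v, ∀ b ∈ closedNbhd G v, a ≠ b → G.Adj a b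

/-- `Z`, the set of simplicial vertices of `G`. -/
def simplicialSet (G : SimpleGraph V) : Set V := {v | IsSimplicial G v}

/-- `N(T)`, the union of open neighborhoods of vertices of `T`. -/
def nbhdSet (G : SimpleGraph V) (T : Set V) : Set V := ⋃ v ∈ T, G.neighborSet v

/-- An independent set of vertices. -/
def IsIndepSet' (G : SimpleGraph V) (T : Set V) : Prop :=
  ∀ u ∈ T, ∀ v ∈ T, ¬ G.Adj u v

/-- The difference `d(T) = |T| - |N(T)|` of a set of vertices. -/
noncomputable def indepDiff (G : SimpleGraph V) (T : Set V) : ℤ :=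
  (T.ncard : ℤ) - ((nbhdSet G T).ncard : ℤ)

/-- The critical independence difference `d_c(G)`. -/
noncomputable def critIndepDiff (G : SimpleGraph V) : ℤ :=
  sSup {d : ℤ | ∃ T : Set V, IsIndepSet' G T ∧ d = indepDiff G T}

/-- A walk is an induced path if it is a path and no two non-consecutive vertices
of it are adjacent. -/
def IsInducedPath (G : SimpleGraph V) {a b : V} (p : G.Walk a b) : Prop :=
  p.IsPath ∧ ∀ (i j : ℕ) (hi : i < p.support.length) (hj : j < p.support.length),
    i + 1 < j → ¬ G.Adj (p.support.get ⟨i, hi⟩) (p.support.get ⟨j, hj⟩)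

/-- A set is monophonically convex if it contains every vertex of every induced path
joining two of its vertices. -/
def MonoConvex (G : SimpleGraph V) (S : Set V) : Prop :=
  ∀ ⦃a b : V⦄, a ∈ S → b ∈ S → ∀ p : G.Walk a b, IsInducedPath G p →
    ∀ w ∈ p.support, w ∈ S

/-- The monophonic convex hull of `S`: the smallest monophonically convex set containing `S`. -/
def monoHull (G : SimpleGraph V) (S : Set V) : Set V :=
  ⋂₀ {T : Set V | S ⊆ T ∧ MonoConvex G T}

/-- A set is monophonically convexly independent if no member is in the hull
of the others. -/
def MConvexIndep (G : SimpleGraph V) (S : Set V) : Prop :=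
  ∀ v ∈ S, v ∉ monoHull G (S \ {v})

/-- The monophonic rank: the largest size of an m-convexly independent set. -/
noncomputable def monoRank (G : SimpleGraph V) : ℕ :=
  sSup {n : ℕ | ∃ S : Set V, MConvexIndep G S ∧ n = S.ncard}

/-- A starlike partition of a graph: a partition of the vertex set into cliques
`V_0, V_1, …, V_t` such that `V_0` is a maximal clique and, for `i ≥ 1`,
all vertices of `V_i` have the same closed neighborhood outside `V_i`,
contained in `V_0`. -/
structure IsStarlikePartition (G : SimpleGraph V) (t : ℕ) (Vp : Fin (t+1) → Set V) : Prop where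
  nonempty : ∀ i, (Vp i).Nonempty
  disjoint : ∀ i j, i ≠ j → Disjoint (Vp i) (Vp j)
  covers : ∀ v : V, ∃ i, v ∈ Vp i
  cliques : ∀ i, G.IsClique (Vp i)
  maximal : ∀ T : Set V, G.IsClique T → Vp 0 ⊆ T → T ⊆ Vp 0
  nbhd_eq : ∀ i : Fin (t+1), i ≠ 0 → ∀ u ∈ Vp i, ∀ v ∈ Vp i,
    closedNbhd G u \ Vp i = closedNbhd G v \ Vp i
  nbhd_sub : ∀ i : Fin (t+1), i ≠ 0 → ∀ u ∈ Vp i, closedNbhd G u \ Vp i ⊆ Vp 0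

/-- `X_i`: the maximal clique containing `V_i` (`X_0 = V_0`; for `i ≥ 1` it is
the closed neighborhood of any vertex of `V_i`). -/
def Xset (G : SimpleGraph V) {t : ℕ} (Vp : Fin (t+1) → Set V) (i : Fin (t+1)) : Set V :=
  if i = 0 then Vp 0 else ⋃ u ∈ Vp i, closedNbhd G u

/-- `C_i = X_i ∩ Z`. -/
def Cset (G : SimpleGraph V) {t : ℕ} (Vp : Fin (t+1) → Set V) (i : Fin (t+1)) : Set V :=
  Xset G Vp i ∩ simplicialSet G

/-- `C'_i = X_i − C_i`. -/
def Cset' (G : SimpleGraph V) {t : ℕ} (Vp : Fin (t+1) → Set V) (i : Fin (t+1)) : Set V :=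
  Xset G Vp i \ Cset G Vp i

/-- `Y_i`: the union of the sets `C_j`, over `j ≠ i` with `C'_j ⊆ C'_i`. -/
def Yset (G : SimpleGraph V) {t : ℕ} (Vp : Fin (t+1) → Set V) (i : Fin (t+1)) : Set V :=
  ⋃ j ∈ {j : Fin (t+1) | j ≠ i ∧ Cset' G Vp j ⊆ Cset' G Vp i}, Cset G Vp j

open scoped Classical in
/-- The vertex set of the split graph `G_i`: if `|N(Y_i) − Y_i| = |C'_i| − 1` and
`|Y_i| ≥ |C'_i| − 1` then `(C'_i − {x}) ∪ Y_i` where `{x} = C'_i − N(Y_i)`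
(so that `C'_i − {x} = C'_i ∩ N(Y_i)`), otherwise `C'_i ∪ Y_i`. -/
noncomputable def Wset (G : SimpleGraph V) {t : ℕ} (Vp : Fin (t+1) → Set V)
    (i : Fin (t+1)) : Set V :=
  if (((nbhdSet G (Yset G Vp i) \ Yset G Vp i).ncard : ℤ) = ((Cset' G Vp i).ncard : ℤ) - 1
      ∧ ((Yset G Vp i).ncard : ℤ) ≥ ((Cset' G Vp i).ncard : ℤ) - 1)
  then (Cset' G Vp i ∩ nbhdSet G (Yset G Vp i)) ∪ Yset G Vp i
  else Cset' G Vp i ∪ Yset G Vp i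

/-- The induced subgraph on `W` with all edges inside `Y` deleted. -/
def inducedMinusY (G : SimpleGraph V) (W Y : Set V) : SimpleGraph ↥W where
  Adj a b := G.Adj a b ∧ ¬((a : V) ∈ Y ∧ (b : V) ∈ Y)
  symm := by
    constructor
    intro a b h
    exact ⟨h.1.symm, fun hc => h.2 ⟨hc.2, hc.1⟩⟩
  loopless := by
    constructor
    intro a h
    exact G.loopless.irrefl a h.1

/-- The split graph `G_i = G[W_i] − E(G[Y_i])`. -/
noncomputable def Gsplit (G : SimpleGraph V) {t : ℕ} (Vp : Fin (t+1) → Set V)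
    (i : Fin (t+1)) : SimpleGraph ↥(Wset G Vp i) :=
  inducedMinusY G (Wset G Vp i) (Yset G Vp i)


/-- Auxiliary: support.get equals getVert. -/
lemma support_get_eq_getVert {G : SimpleGraph V} {a b : V} (p : G.Walk a b)
    (i : ℕ) (hi : i < p.support.length) : p.support.get ⟨i, hi⟩ = p.getVert i := by
  induction p generalizing i with
  | nil =>
    simp only [Walk.support_nil, List.length_singleton] at hi
    interval_cases i
    rfl
  | cons h q ih =>
    cases i with
    | zero => rfl
    | succ n =>
      simp only [Walk.support_cons, List.get_cons_succ, Walk.getVert_cons_succ]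
      exact ih n _

/-- Auxiliary: an internal vertex of an induced path has two distinct non-adjacent
neighbors on the path. -/
lemma internal_struct {G : SimpleGraph V} {a b : V} {p : G.Walk a b}
    (hp : IsInducedPath G p) {w : V} (hw : w ∈ p.support) (hwa : w ≠ a) (hwb : w ≠ b) :
    ∃ x y, G.Adj w x ∧ G.Adj w y ∧ x ≠ y ∧ ¬ G.Adj x y ∧ x ∈ p.support ∧ y ∈ p.support := by
  obtain ⟨⟨k, hk⟩, hget⟩ := List.mem_iff_get.mp hw
  have hsl : p.support.length = p.length + 1 := Walk.length_support p
  have hwk : p.getVert k = w := by rw [← support_get_eq_getVert p k hk, hget]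
  have hk0 : k ≠ 0 := by
    rintro rfl
    exact hwa (by rw [← hwk, Walk.getVert_zero])
  have hkl : k < p.length := by
    rcases lt_or_eq_of_le (Nat.lt_succ_iff.mp (hsl ▸ hk)) with h' | h'
    · exact h'
    · exact absurd (by rw [← hwk, h', Walk.getVert_length]) hwb
  refine ⟨p.getVert (k-1), p.getVert (k+1), ?_, ?_, ?_, ?_, ?_, ?_⟩
  · have := p.adj_getVert_succ (i := k-1) (by omega)
    rw [show k - 1 + 1 = k by omega, hwk] at this
    exact this.symm
  · have := p.adj_getVert_succ (i := k) hkl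
    rwa [hwk] at this
  · intro hxy
    have h1 : k - 1 < p.support.length := by omega
    have h2 : k + 1 < p.support.length := by omega
    have := (List.Nodup.get_inj_iff hp.1.support_nodup
      (i := ⟨k-1, h1⟩) (j := ⟨k+1, h2⟩)).mp ?_
    · simp only [Fin.mk.injEq] at this; omega
    · rw [support_get_eq_getVert, support_get_eq_getVert, hxy]
  · have h1 : k - 1 < p.support.length := by omega
    have h2 : k + 1 < p.support.length := by omega
    have := hp.2 (k-1) (k+1) h1 h2 (by omega)
    rwa [support_get_eq_getVert, support_get_eq_getVert] at this
  · rw [← support_get_eq_getVert p (k-1) (by omega)]; exact List.get_mem _ _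
  · rw [← support_get_eq_getVert p (k+1) (by omega)]; exact List.get_mem _ _

/-- Auxiliary: a simplicial vertex cannot be internal on an induced path. -/
lemma no_internal_simplicial {G : SimpleGraph V} {a b : V} {p : G.Walk a b}
    (hp : IsInducedPath G p) {w : V} (hw : w ∈ p.support) (hwa : w ≠ a) (hwb : w ≠ b)
    (hs : IsSimplicial G w) : False := by
  obtain ⟨x, y, hwx, hwy, hxy, hnadj, -, -⟩ := internal_struct hp hw hwa hwb
  exact hnadj (hs x (Set.mem_insert_of_mem _ hwx) y (Set.mem_insert_of_mem _ hwy) hxy)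

/-- Auxiliary: in a starlike graph, vertices outside `V_0`'s part are simplicial. -/
lemma simplicial_of_ne_zero {G : SimpleGraph V} {t : ℕ} {Vp : Fin (t+1) → Set V}
    (hstar : IsStarlikePartition G t Vp) {i : Fin (t+1)} (hi : i ≠ 0) {u : V}
    (hu : u ∈ Vp i) : IsSimplicial G u := by
  intro x hx y hy hxy
  by_cases hxi : x ∈ Vp i <;> by_cases hyi : y ∈ Vp i
  · exact hstar.cliques i hxi hyi hxy
  · have hy' : y ∈ closedNbhd G x \ Vp i := by
      rw [← hstar.nbhd_eq i hi u hu x hxi]; exact ⟨hy, hyi⟩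
    rcases hy'.1 with h | h
    · exact absurd h.symm hxy
    · exact h
  · have hx' : x ∈ closedNbhd G y \ Vp i := by
      rw [← hstar.nbhd_eq i hi u hu y hyi]; exact ⟨hx, hxi⟩
    rcases hx'.1 with h | h
    · exact absurd h hxy
    · exact h.symm
  · exact hstar.cliques 0 (hstar.nbhd_sub i hi u hu ⟨hx, hxi⟩)
      (hstar.nbhd_sub i hi u hu ⟨hy, hyi⟩) hxy

/-- Auxiliary: non-simplicial vertices of a starlike graph lie in `V_0`. -/
lemma nonsimplicial_mem_V0 {G : SimpleGraph V} {t : ℕ} {Vp : Fin (t+1) → Set V}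
    (hstar : IsStarlikePartition G t Vp) {x : V} (hx : ¬ IsSimplicial G x) : x ∈ Vp 0 := by
  obtain ⟨i, hi⟩ := hstar.covers x
  by_cases h0 : i = 0
  · exact h0 ▸ hi
  · exact absurd (simplicial_of_ne_zero hstar h0 hi) hx

/-- in a starlike graph, if no vertex of `S − Z` is adjacent to a
vertex of `S ∩ Z`, then `S` is m-convexly independent. -/
theorem statement1 [Fintype V] (G : SimpleGraph V) (t : ℕ) (Vp : Fin (t+1) → Set V)
    (hstar : IsStarlikePartition G t Vp) (S : Set V)
    (h : ∀ u ∈ S \ simplicialSet G, ∀ v ∈ S ∩ simplicialSet G, ¬ G.Adj u v) :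
    MConvexIndep G S := by
  intro v hv hmem
  by_cases hvs : IsSimplicial G v
  · -- v is simplicial: V \ {v} is monophonically convex
    have hconv : MonoConvex G ({v}ᶜ : Set V) := by
      intro a b ha hb p hp w hw
      simp only [Set.mem_compl_iff, Set.mem_singleton_iff]
      rintro rfl
      exact no_internal_simplicial hp hw (fun hwa => ha (hwa ▸ rfl))
        (fun hwb => hb (hwb ▸ rfl)) hvs
    have := hmem ({v}ᶜ : Set V) ⟨fun u hu => hu.2, hconv⟩
    exact this rfl
  · -- v not simplicial
    set T : Set V := ({v} ∪ (G.neighborSet v ∩ simplicialSet G))ᶜ with hT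
    have hsub : S \ {v} ⊆ T := by
      rintro u ⟨huS, huv⟩ (hu | hu)
      · exact huv hu
      · exact h v ⟨hv, hvs⟩ u ⟨huS, hu.2⟩ hu.1
    have hconv : MonoConvex G T := by
      intro a b ha hb p hp w hw
      by_contra hwT
      have hwmem : w ∈ ({v} : Set V) ∪ (G.neighborSet v ∩ simplicialSet G) :=
        not_not.mp (fun hc => hwT hc)
      have hwa : w ≠ a := fun hwa => ha (hwa ▸ hwmem)
      have hwb : w ≠ b := fun hwb => hb (hwb ▸ hwmem)
      rcases hwmem with hwv | hwz
      · -- w = v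
        rcases hwv with rfl
        obtain ⟨x, y, hwx, hwy, hxy, hnadj, hxs, hys⟩ := internal_struct hp hw hwa hwb
        have key : ∀ z, G.Adj w z → z ∈ p.support → z ∈ Vp 0 := by
          intro z hz hzs
          by_cases hzsimp : IsSimplicial G z
          · exfalso
            have hza : z ≠ a := fun hza => ha (hza ▸ Or.inr ⟨hz, hzsimp⟩)
            have hzb : z ≠ b := fun hzb => hb (hzb ▸ Or.inr ⟨hz, hzsimp⟩)
            exact no_internal_simplicial hp hzs hza hzb hzsimp
          · exact nonsimplicial_mem_V0 hstar hzsimp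
        exact hnadj (hstar.cliques 0 (key x hwx hxs) (key y hwy hys) hxy)
      · -- w is a simplicial neighbor of v, internal on the path
        exact no_internal_simplicial hp hw hwa hwb hwz.2
    exact (hmem T ⟨hsub, hconv⟩) (Or.inl rfl)
end

section
/- Let G be a starlike graph with clique partition (V_0, V_1, …, V_t) and let S be an m-convexly independent set of G. Suppose there is an edge u·v_i of G with u ∈ S ∩ C'_0 and v_i ∈ S ∩ C_i for some i ∈ {0, 1, …, t}. Then S contains no vertex of C'_0 − C'_i, and moreover S − C_i ⊆ C'_i ∪ Y_i. -/
open SimpleGraph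

variable {V : Type*}

section Aux

variable {G : SimpleGraph V} {t : ℕ} {Vp : Fin (t+1) → Set V}

lemma mem_monoHull_of_path {S : Set V} {a b x : V} (ha : a ∈ S) (hb : b ∈ S)
    (p : G.Walk a b) (hp : IsInducedPath G p) (hx : x ∈ p.support) :
    x ∈ monoHull G S := by
  rw [monoHull, Set.mem_sInter]
  rintro T ⟨h1, h2⟩
  exact h2 (h1 ha) (h1 hb) p hp x hx

lemma isInducedPath_two {a b c : V} (hab : G.Adj a b) (hbc : G.Adj b c)
    (hac : ¬ G.Adj a c) (hac' : a ≠ c) :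
    IsInducedPath G (Walk.cons hab (Walk.cons hbc Walk.nil)) := by
  constructor
  · simp [Walk.isPath_def, hab.ne, hbc.ne, hac']
  · intro i j hi hj hij
    have hj' : j < 3 := by simpa using hj
    obtain rfl : i = 0 := by omega
    obtain rfl : j = 2 := by omega
    exact hac

lemma isInducedPath_three {a b c d : V} (hab : G.Adj a b) (hbc : G.Adj b c)
    (hcd : G.Adj c d) (hac : ¬ G.Adj a c) (had : ¬ G.Adj a d) (hbd : ¬ G.Adj b d)
    (hac' : a ≠ c) (had' : a ≠ d) (hbd' : b ≠ d) :
    IsInducedPath G (Walk.cons hab (Walk.cons hbc (Walk.cons hcd Walk.nil))) := by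
  constructor
  · simp [Walk.isPath_def, hab.ne, hbc.ne, hcd.ne, hac', had', hbd']
  · intro i j hi hj hij
    have hj' : j < 4 := by simpa using hj
    have : (i = 0 ∧ j = 2) ∨ (i = 0 ∧ j = 3) ∨ (i = 1 ∧ j = 3) := by omega
    rcases this with ⟨rfl, rfl⟩ | ⟨rfl, rfl⟩ | ⟨rfl, rfl⟩
    · exact hac
    · exact had
    · exact hbd

lemma clique_subset_closedNbhd (hstar : IsStarlikePartition G t Vp) {j : Fin (t+1)}
    {a : V} (ha : a ∈ Vp j) : Vp j ⊆ closedNbhd G a := by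
  intro b hb
  rcases eq_or_ne b a with rfl | hne
  · exact Set.mem_insert _ _
  · exact Set.mem_insert_of_mem _ (hstar.cliques j ha hb hne.symm)

lemma closedNbhd_eq_Xset (hstar : IsStarlikePartition G t Vp) {j : Fin (t+1)}
    (hj : j ≠ 0) {a : V} (ha : a ∈ Vp j) : closedNbhd G a = Xset G Vp j := by
  rw [Xset, if_neg hj]
  apply Set.Subset.antisymm
  · exact fun x hx => Set.mem_biUnion ha hx
  · rintro x hx
    simp only [Set.mem_iUnion] at hx
    obtain ⟨b, hb, hxb⟩ := hx
    by_cases hxV : x ∈ Vp j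
    · exact clique_subset_closedNbhd hstar ha hxV
    · have heq := hstar.nbhd_eq j hj b hb a ha
      have : x ∈ closedNbhd G a \ Vp j := heq ▸ ⟨hxb, hxV⟩
      exact this.1

lemma isClique_Xset (hstar : IsStarlikePartition G t Vp) (j : Fin (t+1)) :
    G.IsClique (Xset G Vp j) := by
  rcases eq_or_ne j 0 with rfl | hj
  · rw [Xset, if_pos rfl]; exact hstar.cliques 0
  · obtain ⟨a, ha⟩ := hstar.nonempty j
    rw [← closedNbhd_eq_Xset hstar hj ha]
    intro x hx y hy hxy
    by_cases hxV : x ∈ Vp j <;> by_cases hyV : y ∈ Vp j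
    · exact hstar.cliques j hxV hyV hxy
    · have hy' : y ∈ closedNbhd G x \ Vp j := by
        rw [hstar.nbhd_eq j hj x hxV a ha]; exact ⟨hy, hyV⟩
      rcases Set.mem_insert_iff.mp hy'.1 with h | h
      · exact absurd h.symm hxy
      · exact h
    · have hx' : x ∈ closedNbhd G y \ Vp j := by
        rw [hstar.nbhd_eq j hj y hyV a ha]; exact ⟨hx, hxV⟩
      rcases Set.mem_insert_iff.mp hx'.1 with h | h
      · exact absurd h hxy
      · exact h.symm
    · exact hstar.cliques 0 (hstar.nbhd_sub j hj a ha ⟨hx, hxV⟩)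
        (hstar.nbhd_sub j hj a ha ⟨hy, hyV⟩) hxy

lemma simplicial_of_mem (hstar : IsStarlikePartition G t Vp) {j : Fin (t+1)}
    (hj : j ≠ 0) {a : V} (ha : a ∈ Vp j) : IsSimplicial G a := by
  intro x hx y hy hxy
  have h := isClique_Xset hstar j
  rw [← closedNbhd_eq_Xset hstar hj ha] at h
  exact h hx hy hxy

lemma closedNbhd_of_simplicial_V0 (hstar : IsStarlikePartition G t Vp) {v : V}
    (hv : v ∈ Vp 0) (hs : IsSimplicial G v) : closedNbhd G v = Vp 0 := by
  apply Set.Subset.antisymm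
  · exact hstar.maximal _ (fun x hx y hy hxy => hs x hx y hy hxy)
      (clique_subset_closedNbhd hstar hv)
  · exact clique_subset_closedNbhd hstar hv

lemma closedNbhd_Cset (hstar : IsStarlikePartition G t Vp) {i : Fin (t+1)} {v : V}
    (hv : v ∈ Cset G Vp i) : closedNbhd G v = Xset G Vp i := by
  obtain ⟨hvX, hvZ⟩ := hv
  rcases eq_or_ne i 0 with rfl | hi
  · rw [Xset, if_pos rfl] at hvX ⊢
    exact closedNbhd_of_simplicial_V0 hstar hvX hvZ
  · obtain ⟨a, ha⟩ := hstar.nonempty i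
    by_cases hvVi : v ∈ Vp i
    · exact closedNbhd_eq_Xset hstar hi hvVi
    · exfalso
      have hvN : v ∈ closedNbhd G a := by
        rw [closedNbhd_eq_Xset hstar hi ha]; exact hvX
      have hvV0 : v ∈ Vp 0 := hstar.nbhd_sub i hi a ha ⟨hvN, hvVi⟩
      have hva : v ≠ a := by
        intro h
        exact Set.disjoint_left.mp (hstar.disjoint 0 i (Ne.symm hi)) hvV0 (h ▸ ha)
      have hadj : G.Adj a v := by
        rcases Set.mem_insert_iff.mp hvN with h | h
        · exact absurd h hva
        · exact h
      have haN : a ∈ closedNbhd G v := Set.mem_insert_of_mem _ hadj.symm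
      rw [closedNbhd_of_simplicial_V0 hstar hvV0 hvZ] at haN
      exact Set.disjoint_left.mp (hstar.disjoint i 0 hi) ha haN

end Aux

/-- if `S` is m-convexly independent in a starlike graph and there is an
edge `u·v_i` with `u ∈ S ∩ C'_0` and `v_i ∈ S ∩ C_i`, then `S` contains no vertex of
`C'_0 − C'_i`, and `S − C_i ⊆ C'_i ∪ Y_i`. -/
theorem statement12 [Fintype V] (G : SimpleGraph V) (t : ℕ) (Vp : Fin (t+1) → Set V)
    (hstar : IsStarlikePartition G t Vp) (S : Set V) (hS : MConvexIndep G S)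
    (i : Fin (t+1)) (u vi : V)
    (hu : u ∈ S ∩ Cset' G Vp 0) (hvi : vi ∈ S ∩ Cset G Vp i) (huvi : G.Adj u vi) :
    S ∩ (Cset' G Vp 0 \ Cset' G Vp i) = ∅ ∧
    S \ Cset G Vp i ⊆ Cset' G Vp i ∪ Yset G Vp i := by
  obtain ⟨huS, huC⟩ := hu
  obtain ⟨hviS, hviC⟩ := hvi
  have hXi : closedNbhd G vi = Xset G Vp i := closedNbhd_Cset hstar hviC
  have huV0 : u ∈ Vp 0 := by
    have h := huC.1; rwa [Xset, if_pos rfl] at h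
  have huns : ¬ IsSimplicial G u := fun h => huC.2 ⟨huC.1, h⟩
  have huXi : u ∈ Xset G Vp i := by
    rw [← hXi]; exact Set.mem_insert_of_mem _ huvi.symm
  have hviXi : vi ∈ Xset G Vp i := hviC.1
  have notadj_vi : ∀ w, w ∉ Xset G Vp i → ¬ G.Adj w vi := by
    intro w hw hadj
    exact hw (hXi ▸ Set.mem_insert_of_mem _ hadj.symm)
  have contra2 : ∀ w ∈ S, w ∉ Xset G Vp i → G.Adj w u → False := by
    intro w hwS hwXi hwu
    have hwvi : ¬ G.Adj w vi := notadj_vi w hwXi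
    have hwne : w ≠ vi := fun h => hwXi (h ▸ hviXi)
    have hwu' : w ≠ u := fun h => hwXi (h ▸ huXi)
    apply hS u huS
    exact mem_monoHull_of_path ⟨hwS, by simp [hwu']⟩ ⟨hviS, by simp [huvi.ne']⟩
      (Walk.cons hwu (Walk.cons huvi Walk.nil))
      (isInducedPath_two hwu huvi hwvi hwne) (by simp)
  have contra3 : ∀ w ∈ S, w ∉ Xset G Vp i → ∀ z, z ∉ Xset G Vp i →
      G.Adj w z → G.Adj z u → ¬ G.Adj w u → False := by
    intro w hwS hwXi z hzXi hwz hzu hwu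
    have hwvi : ¬ G.Adj w vi := notadj_vi w hwXi
    have hzvi : ¬ G.Adj z vi := notadj_vi z hzXi
    have hwne : w ≠ vi := fun h => hwXi (h ▸ hviXi)
    have hzne : z ≠ vi := fun h => hzXi (h ▸ hviXi)
    have hwu' : w ≠ u := fun h => hwXi (h ▸ huXi)
    apply hS u huS
    exact mem_monoHull_of_path ⟨hwS, by simp [hwu']⟩ ⟨hviS, by simp [huvi.ne']⟩
      (Walk.cons hwz (Walk.cons hzu (Walk.cons huvi Walk.nil)))
      (isInducedPath_three hwz hzu huvi hwu hwvi hzvi hwu' hwne hzne) (by simp)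
  have claim1 : S ∩ (Cset' G Vp 0 \ Cset' G Vp i) = ∅ := by
    rw [Set.eq_empty_iff_forall_notMem]
    rintro w ⟨hwS, hwC0, hwCi⟩
    have hwV0 : w ∈ Vp 0 := by
      have h := hwC0.1; rwa [Xset, if_pos rfl] at h
    have hwns : ¬ IsSimplicial G w := fun h => hwC0.2 ⟨hwC0.1, h⟩
    have hwXi : w ∉ Xset G Vp i := fun h => hwCi ⟨h, fun hc => hwns hc.2⟩
    have hwu' : w ≠ u := fun h => hwXi (h ▸ huXi)
    exact contra2 w hwS hwXi (hstar.cliques 0 hwV0 huV0 hwu')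
  refine ⟨claim1, ?_⟩
  rintro w ⟨hwS, hwCi⟩
  by_contra hcon
  have hwCi' : w ∉ Cset' G Vp i := fun h => hcon (Or.inl h)
  have hwYi : w ∉ Yset G Vp i := fun h => hcon (Or.inr h)
  have hwXi : w ∉ Xset G Vp i := by
    intro h
    by_cases hs : IsSimplicial G w
    · exact hwCi ⟨h, hs⟩
    · exact hwCi' ⟨h, fun hc => hs hc.2⟩
  obtain ⟨j, hwVj⟩ := hstar.covers w
  have hwsimp : IsSimplicial G w := by
    rcases eq_or_ne j 0 with rfl | hj
    · by_contra hns
      have hmem : w ∈ S ∩ (Cset' G Vp 0 \ Cset' G Vp i) :=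
        ⟨hwS, ⟨⟨(by rw [Xset, if_pos rfl]; exact hwVj), fun hc => hns hc.2⟩, hwCi'⟩⟩
      rw [claim1] at hmem
      exact hmem
    · exact simplicial_of_mem hstar hj hwVj
  have hwXj : w ∈ Xset G Vp j := by
    rcases eq_or_ne j 0 with rfl | hj
    · rw [Xset, if_pos rfl]; exact hwVj
    · rw [← closedNbhd_eq_Xset hstar hj hwVj]; exact Set.mem_insert _ _
  have hji : j ≠ i := fun h => hwXi (h ▸ hwXj)
  have hnsub : ¬ (Cset' G Vp j ⊆ Cset' G Vp i) := by
    intro hsub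
    exact hwYi (Set.mem_biUnion (show j ∈ {j : Fin (t+1) | j ≠ i ∧
      Cset' G Vp j ⊆ Cset' G Vp i} from ⟨hji, hsub⟩) ⟨hwXj, hwsimp⟩)
  obtain ⟨z, hzCj, hzCi⟩ := Set.not_subset.mp hnsub
  have hzXj : z ∈ Xset G Vp j := hzCj.1
  have hzns : ¬ IsSimplicial G z := fun h => hzCj.2 ⟨hzCj.1, h⟩
  have hzXi : z ∉ Xset G Vp i := fun h => hzCi ⟨h, fun hc => hzns hc.2⟩
  have hwz_adj : G.Adj w z ∧ z ∈ Vp 0 := by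
    rcases eq_or_ne j 0 with rfl | hj
    · have hzV0 : z ∈ Vp 0 := by rwa [Xset, if_pos rfl] at hzXj
      have hne : w ≠ z := fun h => hzns (h ▸ hwsimp)
      exact ⟨hstar.cliques 0 hwVj hzV0 hne, hzV0⟩
    · have hzN : z ∈ closedNbhd G w := by
        rw [closedNbhd_eq_Xset hstar hj hwVj]; exact hzXj
      have hzVj : z ∉ Vp j := fun hc => hzns (simplicial_of_mem hstar hj hc)
      have hzV0 : z ∈ Vp 0 := hstar.nbhd_sub j hj w hwVj ⟨hzN, hzVj⟩
      have hne : z ≠ w := fun h => hzns (h ▸ hwsimp)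
      rcases Set.mem_insert_iff.mp hzN with h | h
      · exact absurd h hne
      · exact ⟨h, hzV0⟩
  obtain ⟨hwz, hzV0⟩ := hwz_adj
  have hzu_ne : z ≠ u := fun h => hzXi (h ▸ huXi)
  have hzu : G.Adj z u := hstar.cliques 0 hzV0 huV0 hzu_ne
  by_cases hwu : G.Adj w u
  · exact contra2 w hwS hwXi hwu
  · exact contra3 w hwS hwXi z hzXi hwz hzu hwu
end
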